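/- arXiv:1008.3262 — 2 statements merged into one kernel-verified Lean document; each statement's English description precedes it below -/
import Mathlib

section
/- Let p > 1, μ ≥ 0, and define S(A) = (μ + |A|)^{p-2} A for matrices A (with S(0)=0 when μ=0). Then for 1 < p ≤ 2 there exists a constant C₂ > 0 (depending only on p) such that for all matrices A, B (not both zero if μ = 0): (S(A) - S(B)) · (A - B) ≥ C₂ |A - B|² / (μ + |A| + |B|)^{2-p}, where X · Y denotes the Frobenius inner product. -/
open Finset

noncomputable def frob {n : ℕ} (A : Matrix (Fin n) (Fin n) ℝ) : ℝ :=
  Real.sqrt (∑ i, ∑ j, (A i j) ^ 2)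

noncomputable def Smap {n : ℕ} (μ p : ℝ) (A : Matrix (Fin n) (Fin n) ℝ) :
    Matrix (Fin n) (Fin n) ℝ :=
  ((μ + frob A) ^ (p - 2) : ℝ) • A

lemma frob_nonneg {n : ℕ} (A : Matrix (Fin n) (Fin n) ℝ) : 0 ≤ frob A :=
  Real.sqrt_nonneg _

lemma frob_sq {n : ℕ} (A : Matrix (Fin n) (Fin n) ℝ) :
    frob A ^ 2 = ∑ i, ∑ j, (A i j) ^ 2 :=
  Real.sq_sqrt (Finset.sum_nonneg fun i _ => Finset.sum_nonneg fun j _ => sq_nonneg _)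

lemma frob_pos {n : ℕ} {A : Matrix (Fin n) (Fin n) ℝ} (hA : A ≠ 0) : 0 < frob A := by
  rcases (frob_nonneg A).lt_or_eq with h | h
  · exact h
  · exfalso
    apply hA
    have h2 : (∑ i, ∑ j, (A i j) ^ 2) = 0 := by
      have := frob_sq A
      rw [← h] at this
      simpa using this.symm
    ext i j
    have hrow : ∀ i ∈ Finset.univ, (∑ j, (A i j) ^ 2) = 0 := by
      intro i _
      have := (Finset.sum_eq_zero_iff_of_nonneg (fun i _ =>
        Finset.sum_nonneg fun j _ => sq_nonneg (A i j))).mp h2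
      exact this i (Finset.mem_univ i)
    have := (Finset.sum_eq_zero_iff_of_nonneg (fun j _ => sq_nonneg (A i j))).mp
      (hrow i (Finset.mem_univ i)) j (Finset.mem_univ j)
    have := pow_eq_zero_iff (n := 2) (by norm_num) |>.mp this
    simpa using this

/-- MVT step: for `0 < y < x`, `(p-1)(μ+x+y)^(p-2)(x-y) ≤ (μ+x)^(p-2) x - (μ+y)^(p-2) y`. -/
lemma mvt_step (p μ y x : ℝ) (hp1 : 1 < p) (hp2 : p ≤ 2) (hμ : 0 ≤ μ)
    (hy : 0 < y) (hyx : y < x) :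
    (p - 1) * (μ + x + y) ^ (p - 2) * (x - y) ≤
      (μ + x) ^ (p - 2) * x - (μ + y) ^ (p - 2) * y := by
  set f : ℝ → ℝ := fun t => (μ + t) ^ (p - 2) * t with hf
  set f' : ℝ → ℝ := fun t => ((p - 2) * (μ + t) ^ (p - 2 - 1) * 1) * t + (μ + t) ^ (p - 2) * 1
    with hf'
  have hderiv : ∀ t, 0 < t → HasDerivAt f (f' t) t := by
    intro t ht
    have htpos : 0 < μ + t := by linarith
    have h1 : HasDerivAt (fun u : ℝ => μ + u) 1 t := by
      simpa using (hasDerivAt_id t).const_add μ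
    have h2 : HasDerivAt (fun u : ℝ => u ^ (p - 2)) ((p - 2) * (μ + t) ^ (p - 2 - 1)) (μ + t) :=
      Real.hasDerivAt_rpow_const (Or.inl htpos.ne')
    have h3 : HasDerivAt (fun u : ℝ => (μ + u) ^ (p - 2)) ((p - 2) * (μ + t) ^ (p - 2 - 1) * 1) t :=
      h2.comp t h1
    exact h3.mul (hasDerivAt_id t)
  have hcont : ContinuousOn f (Set.Icc y x) := by
    intro t ht
    exact (hderiv t (lt_of_lt_of_le hy ht.1)).continuousAt.continuousWithinAt
  obtain ⟨c, hc, hceq⟩ := exists_hasDerivAt_eq_slope f f' hyx hcont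
    (fun t ht => hderiv t (lt_trans hy ht.1))
  have hcpos : 0 < c := lt_trans hy hc.1
  have hmc : 0 < μ + c := by linarith
  have hfx : f x - f y = f' c * (x - y) := by
    rw [hceq, div_mul_cancel₀ _ (sub_ne_zero.mpr hyx.ne')]
  -- lower bound f' c
  have hsplit : (μ + c) ^ (p - 2) = (μ + c) ^ (p - 2 - 1) * (μ + c) := by
    rw [← Real.rpow_add_one hmc.ne' (p - 2 - 1)]
    ring_nf
  have hpow_nonneg : 0 ≤ (μ + c) ^ (p - 2 - 1) := Real.rpow_nonneg hmc.le _
  have hlow : (p - 1) * (μ + c) ^ (p - 2) ≤ f' c := by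
    have : f' c = (μ + c) ^ (p - 2 - 1) * (μ + (p - 1) * c) := by
      simp only [hf', hsplit]; ring
    rw [this, hsplit]
    have h4 : (p - 1) * (μ + c) ≤ μ + (p - 1) * c := by nlinarith
    nlinarith
  have hanti : (μ + x + y) ^ (p - 2) ≤ (μ + c) ^ (p - 2) :=
    Real.rpow_le_rpow_of_nonpos hmc (by linarith [hc.2]) (by linarith)
  have hfin : (p - 1) * (μ + x + y) ^ (p - 2) ≤ f' c := by
    calc (p - 1) * (μ + x + y) ^ (p - 2) ≤ (p - 1) * (μ + c) ^ (p - 2) := by nlinarith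
    _ ≤ f' c := hlow
  have hxy : 0 < x - y := by linarith
  have : (p - 1) * (μ + x + y) ^ (p - 2) * (x - y) ≤ f' c * (x - y) := by nlinarith
  calc (p - 1) * (μ + x + y) ^ (p - 2) * (x - y) ≤ f' c * (x - y) := this
    _ = f x - f y := hfx.symm
    _ = (μ + x) ^ (p - 2) * x - (μ + y) ^ (p - 2) * y := rfl

lemma core_aux (p μ x y s : ℝ) (hp1 : 1 < p) (hp2 : p ≤ 2) (hμ : 0 ≤ μ)
    (hx : 0 ≤ x) (hy : 0 ≤ y) (hyx : y ≤ x) (hm : 0 < μ + x + y) (hs : |s| ≤ x * y) :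
    (p - 1) * (x ^ 2 + y ^ 2 - 2 * s) * (μ + x + y) ^ (p - 2) ≤
      (μ + x) ^ (p - 2) * x ^ 2 + (μ + y) ^ (p - 2) * y ^ 2
        - ((μ + x) ^ (p - 2) + (μ + y) ^ (p - 2)) * s := by
  have hsle : s ≤ x * y := (abs_le.mp hs).2
  have hsge : -(x * y) ≤ s := (abs_le.mp hs).1
  have hca : 0 ≤ (μ + x) ^ (p - 2) := Real.rpow_nonneg (by linarith) _
  have hcb : 0 ≤ (μ + y) ^ (p - 2) := Real.rpow_nonneg (by linarith) _
  have hcm : 0 ≤ (μ + x + y) ^ (p - 2) := Real.rpow_nonneg (by linarith) _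
  rcases hy.lt_or_eq with hy0 | hy0
  · -- 0 < y, hence 0 < x and all bases positive
    have hx0 : 0 < x := lt_of_lt_of_le hy0 hyx
    have hbpos : 0 < μ + y := by linarith
    have hapos : 0 < μ + x := by linarith
    have hcmca : (μ + x + y) ^ (p - 2) ≤ (μ + x) ^ (p - 2) :=
      Real.rpow_le_rpow_of_nonpos hapos (by linarith) (by linarith)
    have hcmcb : (μ + x + y) ^ (p - 2) ≤ (μ + y) ^ (p - 2) :=
      Real.rpow_le_rpow_of_nonpos hbpos (by linarith) (by linarith)
    have key : (p - 1) * (x - y) ^ 2 * (μ + x + y) ^ (p - 2) ≤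
        (μ + x) ^ (p - 2) * x ^ 2 + (μ + y) ^ (p - 2) * y ^ 2
          - ((μ + x) ^ (p - 2) + (μ + y) ^ (p - 2)) * (x * y) := by
      rcases hyx.lt_or_eq with hyx' | hyx'
      · have := mvt_step p μ y x hp1 hp2 hμ hy0 hyx'
        nlinarith [this, sq_nonneg (x - y)]
      · subst hyx'
        nlinarith
    have h2 : 0 ≤ (x * y - s) * (((μ + x) ^ (p - 2) + (μ + y) ^ (p - 2))
        - 2 * (p - 1) * (μ + x + y) ^ (p - 2)) := by
      apply mul_nonneg (by linarith)
      nlinarith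
    nlinarith [key, h2]
  · -- y = 0
    subst hy0
    have hs0 : s = 0 := by
      have : |s| ≤ 0 := by simpa using hs
      have := abs_nonneg s
      have : |s| = 0 := le_antisymm ‹|s| ≤ 0› ‹0 ≤ |s|›
      exact abs_eq_zero.mp this
    subst hs0
    have heq : (μ + x + 0 : ℝ) = μ + x := by ring
    rw [heq]
    nlinarith [mul_nonneg (mul_nonneg (show (0:ℝ) ≤ 2 - p by linarith) (sq_nonneg x)) hca]

lemma core (p μ x y s : ℝ) (hp1 : 1 < p) (hp2 : p ≤ 2) (hμ : 0 ≤ μ)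
    (hx : 0 ≤ x) (hy : 0 ≤ y) (hm : 0 < μ + x + y) (hs : |s| ≤ x * y) :
    (p - 1) * (x ^ 2 + y ^ 2 - 2 * s) * (μ + x + y) ^ (p - 2) ≤
      (μ + x) ^ (p - 2) * x ^ 2 + (μ + y) ^ (p - 2) * y ^ 2
        - ((μ + x) ^ (p - 2) + (μ + y) ^ (p - 2)) * s := by
  rcases le_total y x with h | h
  · exact core_aux p μ x y s hp1 hp2 hμ hx hy h hm hs
  · have := core_aux p μ y x s hp1 hp2 hμ hy hx h (by linarith) (by rwa [mul_comm])
    rw [show μ + y + x = μ + x + y by ring] at this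
    rw [show x ^ 2 + y ^ 2 - 2 * s = y ^ 2 + x ^ 2 - 2 * s by ring]
    linarith

/-- Monotonicity estimate for the p-structure tensor, 1 < p ≤ 2. -/
theorem statement0 (p : ℝ) (hp1 : 1 < p) (hp2 : p ≤ 2) :
    ∃ C₂ : ℝ, 0 < C₂ ∧ ∀ (n : ℕ) (μ : ℝ), 0 ≤ μ →
      ∀ A B : Matrix (Fin n) (Fin n) ℝ, ¬(μ = 0 ∧ A = 0 ∧ B = 0) →
        C₂ * frob (A - B) ^ 2 / (μ + frob A + frob B) ^ (2 - p) ≤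
          ∑ i, ∑ j, (Smap μ p A - Smap μ p B) i j * (A - B) i j := by
  refine ⟨p - 1, by linarith, ?_⟩
  intro n μ hμ A B hAB
  set x := frob A with hxdef
  set y := frob B with hydef
  set s : ℝ := ∑ i, ∑ j, A i j * B i j with hsdef
  set X : ℝ := ∑ i, ∑ j, (A i j) ^ 2 with hXdef
  set Y : ℝ := ∑ i, ∑ j, (B i j) ^ 2 with hYdef
  have hx : 0 ≤ x := frob_nonneg A
  have hy : 0 ≤ y := frob_nonneg B
  have hx2 : x ^ 2 = X := frob_sq A
  have hy2 : y ^ 2 = Y := frob_sq B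
  -- positivity of μ + x + y
  have hm : 0 < μ + x + y := by
    rcases hμ.lt_or_eq with hμ0 | hμ0
    · linarith
    · subst hμ0
      rcases Classical.em (A = 0) with hA | hA
      · rcases Classical.em (B = 0) with hB | hB
        · exact absurd ⟨rfl, hA, hB⟩ hAB
        · have := frob_pos hB; linarith
      · have := frob_pos hA; linarith
  -- Cauchy–Schwarz
  have hs : |s| ≤ x * y := by
    have hcs := Finset.sum_mul_sq_le_sq_mul_sq Finset.univ
      (fun q : Fin n × Fin n => A q.1 q.2) (fun q : Fin n × Fin n => B q.1 q.2)
    rw [Fintype.sum_prod_type, Fintype.sum_prod_type, Fintype.sum_prod_type] at hcs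
    have hcs' : s ^ 2 ≤ (x * y) ^ 2 := by
      calc s ^ 2 ≤ X * Y := hcs
        _ = (x * y) ^ 2 := by rw [← hx2, ← hy2]; ring
    have h1 : |s| = Real.sqrt (s ^ 2) := (Real.sqrt_sq_eq_abs s).symm
    have h2 : x * y = Real.sqrt ((x * y) ^ 2) := by
      rw [Real.sqrt_sq (mul_nonneg hx hy)]
    rw [h1, h2]
    exact Real.sqrt_le_sqrt hcs'
  -- expansion of frob (A - B) ^ 2
  have hfrobsub : frob (A - B) ^ 2 = X + Y - 2 * s := by
    rw [frob_sq]
    have : ∀ i, ∑ j, ((A - B) i j) ^ 2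
        = ∑ j, ((A i j) ^ 2 + (B i j) ^ 2 - 2 * (A i j * B i j)) := by
      intro i
      refine Finset.sum_congr rfl fun j _ => ?_
      simp [Matrix.sub_apply]; ring
    rw [Finset.sum_congr rfl fun i _ => this i]
    simp only [Finset.sum_sub_distrib, Finset.sum_add_distrib, ← Finset.mul_sum]
    rfl
  -- expansion of the inner product
  have hinner : ∑ i, ∑ j, (Smap μ p A - Smap μ p B) i j * (A - B) i j
      = (μ + x) ^ (p - 2) * X + (μ + y) ^ (p - 2) * Y
        - ((μ + x) ^ (p - 2) + (μ + y) ^ (p - 2)) * s := by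
    have : ∀ i, ∑ j, (Smap μ p A - Smap μ p B) i j * (A - B) i j
        = ∑ j, ((μ + x) ^ (p - 2) * (A i j) ^ 2 + (μ + y) ^ (p - 2) * (B i j) ^ 2
            - ((μ + x) ^ (p - 2) + (μ + y) ^ (p - 2)) * (A i j * B i j)) := by
      intro i
      refine Finset.sum_congr rfl fun j _ => ?_
      simp [Smap, Matrix.sub_apply, Matrix.smul_apply, smul_eq_mul, ← hxdef, ← hydef]
      ring
    rw [Finset.sum_congr rfl fun i _ => this i]
    simp only [Finset.sum_sub_distrib, Finset.sum_add_distrib, ← Finset.mul_sum]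
    rfl
  -- rewrite the division
  have hdiv : (p - 1) * frob (A - B) ^ 2 / (μ + x + y) ^ (2 - p)
      = (p - 1) * (X + Y - 2 * s) * (μ + x + y) ^ (p - 2) := by
    rw [hfrobsub, div_eq_mul_inv, show (p - 2 : ℝ) = -(2 - p) by ring,
      Real.rpow_neg hm.le]
  rw [hdiv, hinner]
  have := core p μ x y s hp1 hp2 hμ hx hy hm hs
  rw [hx2, hy2] at this
  exact this
end

section
/- Let p with 1 < p ≤ 2 and μ ≥ 0, and define S(A) = (μ + |A|)^{p-2} A. Then there exists a constant C₃ > 0 (depending only on p) such that for all matrices A, B (not both zero if μ = 0): |S(A) - S(B)| ≤ C₃ |A - B| / (μ + |A| + |B|)^{2-p}. -/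
open Finset

/-- The matrix viewed as a Euclidean vector. -/
noncomputable def toE {n : ℕ} (A : Matrix (Fin n) (Fin n) ℝ) :
    EuclideanSpace ℝ (Fin n × Fin n) :=
  WithLp.toLp 2 (fun q : Fin n × Fin n => A q.1 q.2)

lemma frob_eq_norm {n : ℕ} (A : Matrix (Fin n) (Fin n) ℝ) : frob A = ‖toE A‖ := by
  rw [EuclideanSpace.norm_eq, frob]
  congr 1
  rw [Fintype.sum_prod_type]
  refine Finset.sum_congr rfl fun i _ => Finset.sum_congr rfl fun j _ => ?_
  simp [toE, Real.norm_eq_abs, sq_abs]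

lemma toE_sub {n : ℕ} (A B : Matrix (Fin n) (Fin n) ℝ) :
    toE (A - B) = toE A - toE B := by ext q; simp [toE]

lemma toE_smul {n : ℕ} (c : ℝ) (A : Matrix (Fin n) (Fin n) ℝ) :
    toE (c • A) = c • toE A := by ext q; simp [toE]

/-- Bernoulli consequence: for `0 < u ≤ t` and `0 ≤ s ≤ 1`,
`t^s - u^s ≤ s * u^(s-1) * (t-u)`. -/
lemma rpow_sub_rpow_le {u t s : ℝ} (hu : 0 < u) (hut : u ≤ t)
    (hs0 : 0 ≤ s) (hs1 : s ≤ 1) :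
    t ^ s - u ^ s ≤ s * u ^ (s - 1) * (t - u) := by
  have ht : 0 < t := hu.trans_le hut
  have hz : (-1 : ℝ) ≤ (t - u) / u := by
    have : (0:ℝ) ≤ (t - u) / u := by
      apply div_nonneg (by linarith) hu.le
    linarith
  have hb := rpow_one_add_le_one_add_mul_self hz hs0 hs1
  have h1 : (1 : ℝ) + (t - u) / u = t / u := by field_simp; ring
  rw [h1] at hb
  have h2 : (t / u) ^ s = t ^ s / u ^ s := Real.div_rpow ht.le hu.le s
  rw [h2] at hb
  have hus : 0 < u ^ s := Real.rpow_pos_of_pos hu s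
  have h3 : u ^ (s - 1) = u ^ s / u := Real.rpow_sub_one hu.ne' s
  rw [h3]
  have := mul_le_mul_of_nonneg_right hb hus.le
  rw [div_mul_cancel₀ _ hus.ne'] at this
  calc t ^ s - u ^ s ≤ (1 + s * ((t - u) / u)) * u ^ s - u ^ s := by linarith
    _ = s * (u ^ s / u) * (t - u) := by field_simp; ring

/-- Main abstract estimate, assuming `‖y‖ ≤ ‖x‖`. -/
lemma key {E : Type*} [NormedAddCommGroup E] [NormedSpace ℝ E] {p : ℝ}
    (hp1 : 1 < p) (hp2 : p ≤ 2) {μ : ℝ} (hμ : 0 ≤ μ) (x y : E)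
    (hba : ‖y‖ ≤ ‖x‖) (ht : 0 < μ + ‖x‖) :
    ‖(μ + ‖x‖) ^ (p - 2) • x - (μ + ‖y‖) ^ (p - 2) • y‖ ≤
      4 * ‖x - y‖ / (μ + ‖x‖ + ‖y‖) ^ (2 - p) := by
  set a := ‖x‖ with ha
  set b := ‖y‖ with hb
  have hb0 : 0 ≤ b := norm_nonneg y
  have ha0 : 0 ≤ a := norm_nonneg x
  set t := μ + a with htd
  set u := μ + b with hud
  have hut : u ≤ t := by simp [htd, hud]; linarith
  have hu0 : 0 ≤ u := by positivity
  set s := 2 - p with hsd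
  have hs0 : 0 ≤ s := by simp [hsd]; linarith
  have hs1 : s ≤ 1 := by simp [hsd]; linarith
  have hw : 0 < μ + a + b := by linarith
  have hdecomp : (t : ℝ) ^ (p - 2) • x - u ^ (p - 2) • y
      = t ^ (p - 2) • (x - y) + (t ^ (p - 2) - u ^ (p - 2)) • y := by
    module
  have htp : 0 ≤ t ^ (p - 2) := Real.rpow_nonneg ht.le _
  have hab : a - b ≤ ‖x - y‖ := norm_sub_norm_le x y
  have hxy0 : 0 ≤ ‖x - y‖ := norm_nonneg _
  -- second term bound
  have hterm2 : |t ^ (p - 2) - u ^ (p - 2)| * b ≤ t ^ (p - 2) * ‖x - y‖ := by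
    rcases eq_or_lt_of_le hu0 with hu | hu
    · have hb0' : b = 0 := by
        have h0 : μ + b = 0 := by rw [← hud, ← hu]
        linarith
      rw [hb0', mul_zero]
      positivity
    · -- u > 0
      have htpos : 0 < t := lt_of_lt_of_le hu hut
      have hmono : t ^ (p - 2) ≤ u ^ (p - 2) := by
        apply Real.rpow_le_rpow_of_nonpos hu hut
        linarith
      rw [abs_of_nonpos (by linarith), neg_sub]
      -- u^(p-2) - t^(p-2) = (t^s - u^s)/(t^s u^s)
      have hts : 0 < t ^ s := Real.rpow_pos_of_pos htpos s
      have hus : 0 < u ^ s := Real.rpow_pos_of_pos hu s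
      have hinv : ∀ z : ℝ, 0 < z → z ^ (p - 2) = (z ^ s)⁻¹ := by
        intro z hz
        rw [hsd, show p - 2 = -(2 - p) by ring, Real.rpow_neg hz.le]
      rw [hinv u hu, hinv t htpos]
      have hber := rpow_sub_rpow_le hu hut hs0 hs1
      have husm : u ^ (s - 1) = u ^ s / u := Real.rpow_sub_one hu.ne' s
      have hdiff : (u ^ s)⁻¹ - (t ^ s)⁻¹ = (t ^ s - u ^ s) / (u ^ s * t ^ s) :=
        inv_sub_inv hus.ne' hts.ne'
      rw [hdiff]
      have hstu : 0 ≤ s * (t - u) := mul_nonneg hs0 (by linarith)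
      have key1 : (t ^ s - u ^ s) * b ≤ s * (t - u) * u ^ s := by
        calc (t ^ s - u ^ s) * b ≤ s * u ^ (s - 1) * (t - u) * b :=
              mul_le_mul_of_nonneg_right hber hb0
          _ = s * (t - u) * (u ^ s / u * b) := by rw [husm]; ring
          _ ≤ s * (t - u) * u ^ s := by
              apply mul_le_mul_of_nonneg_left _ hstu
              rw [div_mul_eq_mul_div, div_le_iff₀ hu]
              have hbu : b ≤ u := by simp [hud]; linarith
              nlinarith [hus.le]
      have hstep : (t ^ s - u ^ s) / (u ^ s * t ^ s) * b ≤ s * (t - u) * (t ^ s)⁻¹ := by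
        rw [div_mul_eq_mul_div, div_le_iff₀ (by positivity)]
        calc (t ^ s - u ^ s) * b ≤ s * (t - u) * u ^ s := key1
          _ = s * (t - u) * (t ^ s)⁻¹ * (u ^ s * t ^ s) := by
              rw [mul_assoc (s * (t - u)), mul_comm (u ^ s) (t ^ s), ← mul_assoc (t ^ s)⁻¹,
                inv_mul_cancel₀ hts.ne', one_mul]
      refine hstep.trans ?_
      have h1 : s * (t - u) ≤ ‖x - y‖ := by
        have htu : t - u = a - b := by rw [htd, hud]; ring
        rw [htu]
        nlinarith [hab, hxy0]
      calc s * (t - u) * (t ^ s)⁻¹ = (t ^ s)⁻¹ * (s * (t - u)) := by ring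
        _ ≤ (t ^ s)⁻¹ * ‖x - y‖ := mul_le_mul_of_nonneg_left h1 (by positivity)
  -- combine
  have hcomb : ‖t ^ (p - 2) • x - u ^ (p - 2) • y‖ ≤ 2 * (t ^ (p - 2) * ‖x - y‖) := by
    rw [hdecomp]
    calc ‖t ^ (p - 2) • (x - y) + (t ^ (p - 2) - u ^ (p - 2)) • y‖
        ≤ ‖t ^ (p - 2) • (x - y)‖ + ‖(t ^ (p - 2) - u ^ (p - 2)) • y‖ := norm_add_le _ _
      _ = t ^ (p - 2) * ‖x - y‖ + |t ^ (p - 2) - u ^ (p - 2)| * b := by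
          rw [norm_smul, norm_smul, Real.norm_eq_abs, Real.norm_eq_abs, abs_of_nonneg htp]
      _ ≤ t ^ (p - 2) * ‖x - y‖ + t ^ (p - 2) * ‖x - y‖ := by linarith
      _ = 2 * (t ^ (p - 2) * ‖x - y‖) := by ring
  refine hcomb.trans ?_
  -- t^(p-2) ≤ 2 * (μ+a+b)^(p-2)
  have hscale : t ^ (p - 2) ≤ 2 * (μ + a + b) ^ (p - 2) := by
    have h2t : μ + a + b ≤ 2 * t := by simp [htd]; linarith
    have h1 : (μ + a + b) ^ (p - 2) ≥ (2 * t) ^ (p - 2) :=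
      Real.rpow_le_rpow_of_nonpos hw h2t (by linarith)
    have h2 : (2 * t) ^ (p - 2) = 2 ^ (p - 2) * t ^ (p - 2) :=
      Real.mul_rpow (by norm_num) ht.le
    have h3 : (2 : ℝ) ^ (p - 2) ≥ 2 ^ (-1 : ℝ) :=
      Real.rpow_le_rpow_left_iff (by norm_num) |>.mpr (by linarith)
    have h4 : (2 : ℝ) ^ (-1 : ℝ) = 1 / 2 := by
      rw [Real.rpow_neg_one]; norm_num
    have h5 : (1 / 2 : ℝ) * t ^ (p - 2) ≤ 2 ^ (p - 2) * t ^ (p - 2) := by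
      apply mul_le_mul_of_nonneg_right _ htp
      rw [← h4]; exact h3
    rw [h2] at h1
    linarith
  have hrw : (μ + a + b) ^ (p - 2) = ((μ + a + b) ^ (2 - p))⁻¹ := by
    rw [show p - 2 = -(2 - p) by ring, Real.rpow_neg hw.le]
  calc 2 * (t ^ (p - 2) * ‖x - y‖) ≤ 2 * (2 * (μ + a + b) ^ (p - 2) * ‖x - y‖) := by
        have h6 := mul_le_mul_of_nonneg_right hscale hxy0
        linarith
    _ = 4 * ‖x - y‖ / (μ + a + b) ^ (2 - p) := by
        rw [hrw]; field_simp; ring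

/-- Lipschitz-type estimate for the p-structure tensor, 1 < p ≤ 2. -/
theorem statement1 (p : ℝ) (hp1 : 1 < p) (hp2 : p ≤ 2) :
    ∃ C₃ : ℝ, 0 < C₃ ∧ ∀ (n : ℕ) (μ : ℝ), 0 ≤ μ →
      ∀ A B : Matrix (Fin n) (Fin n) ℝ, ¬(μ = 0 ∧ A = 0 ∧ B = 0) →
        frob (Smap μ p A - Smap μ p B) ≤
          C₃ * frob (A - B) / (μ + frob A + frob B) ^ (2 - p) := by
  refine ⟨4, by norm_num, fun n μ hμ A B hne => ?_⟩
  have hEA : toE (Smap μ p A - Smap μ p B)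
      = (μ + ‖toE A‖) ^ (p - 2) • toE A - (μ + ‖toE B‖) ^ (p - 2) • toE B := by
    rw [toE_sub, Smap, Smap, toE_smul, toE_smul, frob_eq_norm, frob_eq_norm]
  have hA0 : frob A = 0 → A = 0 := by
    intro h
    rw [frob_eq_norm, norm_eq_zero] at h
    funext i j
    have := congrArg (fun v : EuclideanSpace ℝ (Fin n × Fin n) => v (i, j)) h
    simpa [toE] using this
  have hB0 : frob B = 0 → B = 0 := by
    intro h
    rw [frob_eq_norm, norm_eq_zero] at h
    funext i j
    have := congrArg (fun v : EuclideanSpace ℝ (Fin n × Fin n) => v (i, j)) h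
    simpa [toE] using this
  have hfA : 0 ≤ frob A := by rw [frob_eq_norm]; positivity
  have hfB : 0 ≤ frob B := by rw [frob_eq_norm]; positivity
  rw [frob_eq_norm, hEA, frob_eq_norm (A - B), toE_sub, frob_eq_norm A, frob_eq_norm B]
  rcases le_total (frob B) (frob A) with hle | hle
  · have ht : 0 < μ + ‖toE A‖ := by
      rw [← frob_eq_norm]
      rcases lt_or_eq_of_le (by positivity : (0:ℝ) ≤ μ + frob A) with h | h
      · exact h
      · exfalso
        have hμ0 : μ = 0 := by linarith
        have hfa0 : frob A = 0 := by linarith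
        have hfb0 : frob B = 0 := by linarith
        exact hne ⟨hμ0, hA0 hfa0, hB0 hfb0⟩
    exact key hp1 hp2 hμ (toE A) (toE B)
      (by rw [← frob_eq_norm, ← frob_eq_norm]; exact hle) ht
  · have ht : 0 < μ + ‖toE B‖ := by
      rw [← frob_eq_norm]
      rcases lt_or_eq_of_le (by positivity : (0:ℝ) ≤ μ + frob B) with h | h
      · exact h
      · exfalso
        have hμ0 : μ = 0 := by linarith
        have hfb0 : frob B = 0 := by linarith
        have hfa0 : frob A = 0 := by linarith
        exact hne ⟨hμ0, hA0 hfa0, hB0 hfb0⟩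
    rw [norm_sub_rev ((μ + ‖toE A‖) ^ (p - 2) • toE A), norm_sub_rev (toE A),
      add_right_comm μ ‖toE A‖ ‖toE B‖]
    exact key hp1 hp2 hμ (toE B) (toE A)
      (by rw [← frob_eq_norm, ← frob_eq_norm]; exact hle) ht
end
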